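/- Let ζ, z : ℕ → ℝ be sequences such that z(n) = Σ_{l=0}^{n} (n!/(n−l)!) · ζ(l) for all n ∈ ℕ. Then for every integer m ≥ 1 and every n ∈ ℕ, Σ_{k : k+m ≤ n} (n!/(n−k−m)!) · ζ(k) = Σ_{k=m}^{n} Σ_{j=0}^{k−m} (−1)^{k−j−m} · (n! / (j! · (k−m−j)! · (n−k)!)) · z(j). -/

import Mathlib

open Finset

lemma aux_alt (d : ℕ) :
    ∑ i ∈ Finset.range (d + 1), (-1 : ℝ) ^ (d - i) * (d.choose i : ℝ)
      = if d = 0 then 1 else 0 := by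
  have h1 : ∑ i ∈ Finset.range (d + 1), (-1 : ℝ) ^ (d - i) * (d.choose i : ℝ)
      = ∑ i ∈ Finset.range (d + 1), (-1 : ℝ) ^ i * (d.choose i : ℝ) := by
    rw [← Finset.sum_range_reflect (fun i => (-1 : ℝ) ^ i * (d.choose i : ℝ)) (d + 1)]
    refine Finset.sum_congr rfl fun i hi => ?_
    have hi' : i ≤ d := Nat.lt_succ_iff.mp (Finset.mem_range.mp hi)
    rw [show d + 1 - 1 - i = d - i from rfl, Nat.choose_symm hi']
  rw [h1]
  have := Int.alternating_sum_range_choose (n := d)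
  have h2 : ((∑ i ∈ Finset.range (d + 1), (-1 : ℤ) ^ i * (d.choose i : ℤ) : ℤ) : ℝ)
      = ∑ i ∈ Finset.range (d + 1), (-1 : ℝ) ^ i * (d.choose i : ℝ) := by
    push_cast
    ring_nf
  rw [← h2, this]
  split_ifs <;> simp

lemma aux_alt_fact (d : ℕ) :
    ∑ i ∈ Finset.range (d + 1),
        (-1 : ℝ) ^ (d - i) / ((Nat.factorial i : ℝ) * (Nat.factorial (d - i) : ℝ))
      = if d = 0 then 1 else 0 := by
  have key : ∀ i ∈ Finset.range (d + 1),
      (-1 : ℝ) ^ (d - i) / ((Nat.factorial i : ℝ) * (Nat.factorial (d - i) : ℝ))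
        = (-1 : ℝ) ^ (d - i) * (d.choose i : ℝ) / (Nat.factorial d : ℝ) := by
    intro i hi
    have hi' : i ≤ d := Nat.lt_succ_iff.mp (Finset.mem_range.mp hi)
    have h := Nat.choose_mul_factorial_mul_factorial hi'
    have h' : ((d.choose i : ℝ)) * (Nat.factorial i : ℝ) * (Nat.factorial (d - i) : ℝ)
        = (Nat.factorial d : ℝ) := by exact_mod_cast congrArg (Nat.cast : ℕ → ℝ) h
    have hfi : (Nat.factorial i : ℝ) ≠ 0 := Nat.cast_ne_zero.mpr (Nat.factorial_ne_zero i)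
    have hfdi : (Nat.factorial (d - i) : ℝ) ≠ 0 := Nat.cast_ne_zero.mpr (Nat.factorial_ne_zero _)
    have hfd : (Nat.factorial d : ℝ) ≠ 0 := Nat.cast_ne_zero.mpr (Nat.factorial_ne_zero d)
    field_simp
    linear_combination (-1 : ℝ) * h'
  rw [Finset.sum_congr rfl key, ← Finset.sum_div, aux_alt]
  split_ifs with h
  · subst h; simp
  · simp

lemma key_sum (s l : ℕ) :
    ∑ j ∈ Finset.range (s + 1),
        (-1 : ℝ) ^ (s - j) * (Nat.descFactorial j l : ℝ)
          / ((Nat.factorial j : ℝ) * (Nat.factorial (s - j) : ℝ))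
      = if s = l then 1 else 0 := by
  by_cases hls : l ≤ s
  · have hsub : Finset.Icc l s ⊆ Finset.range (s + 1) := by
      intro x hx; simp only [Finset.mem_Icc] at hx; exact Finset.mem_range.mpr (by omega)
    rw [← Finset.sum_subset hsub (by
      intro j hj hj'
      simp only [Finset.mem_range, Finset.mem_Icc] at hj hj'
      have hjl : j < l := by omega
      have : Nat.descFactorial j l = 0 := Nat.descFactorial_eq_zero_iff_lt.mpr hjl
      rw [this]; simp)]
    rw [show Finset.Icc l s = Finset.Ico l (s + 1) by rw [Finset.Ico_add_one_right_eq_Icc],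
      Finset.sum_Ico_eq_sum_range]
    have hrange : s + 1 - l = (s - l) + 1 := by omega
    rw [hrange]
    have hterm : ∀ i ∈ Finset.range ((s - l) + 1),
        (-1 : ℝ) ^ (s - (l + i)) * (Nat.descFactorial (l + i) l : ℝ)
          / ((Nat.factorial (l + i) : ℝ) * (Nat.factorial (s - (l + i)) : ℝ))
        = (-1 : ℝ) ^ ((s - l) - i)
          / ((Nat.factorial i : ℝ) * (Nat.factorial ((s - l) - i) : ℝ)) := by
      intro i hi
      have hi' : i ≤ s - l := Nat.lt_succ_iff.mp (Finset.mem_range.mp hi)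
      have h1 : s - (l + i) = (s - l) - i := by omega
      have h2 : (Nat.factorial ((l + i) - l)) * Nat.descFactorial (l + i) l
          = Nat.factorial (l + i) := Nat.factorial_mul_descFactorial (by omega)
      have h2' : (Nat.factorial i : ℝ) * (Nat.descFactorial (l + i) l : ℝ)
          = (Nat.factorial (l + i) : ℝ) := by
        rw [show (l + i) - l = i by omega] at h2; exact_mod_cast congrArg (Nat.cast : ℕ → ℝ) h2
      have hfi : (Nat.factorial i : ℝ) ≠ 0 := Nat.cast_ne_zero.mpr (Nat.factorial_ne_zero i)
      have hfli : (Nat.factorial (l + i) : ℝ) ≠ 0 := Nat.cast_ne_zero.mpr (Nat.factorial_ne_zero _)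
      have hfsi : (Nat.factorial ((s - l) - i) : ℝ) ≠ 0 :=
        Nat.cast_ne_zero.mpr (Nat.factorial_ne_zero _)
      rw [h1]
      field_simp
      linear_combination h2'
    rw [Finset.sum_congr rfl hterm, aux_alt_fact]
    have : (s - l = 0) ↔ (s = l) := by omega
    simp [this]
  · have hz : ∀ j ∈ Finset.range (s + 1),
        (-1 : ℝ) ^ (s - j) * (Nat.descFactorial j l : ℝ)
          / ((Nat.factorial j : ℝ) * (Nat.factorial (s - j) : ℝ)) = 0 := by
      intro j hj
      have : Nat.descFactorial j l = 0 := Nat.descFactorial_eq_zero_iff_lt.mpr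
        (by have := Nat.lt_succ_iff.mp (Finset.mem_range.mp hj); omega)
      rw [this]; simp
    rw [Finset.sum_congr rfl hz, Finset.sum_const, smul_zero, if_neg (by omega)]

theorem lattice_multiplication_by_t_pow (ζ z : ℕ → ℝ)
    (hz : ∀ n : ℕ, z n = ∑ l ∈ Finset.range (n + 1), (Nat.descFactorial n l : ℝ) * ζ l) :
    ∀ m : ℕ, 1 ≤ m → ∀ n : ℕ,
      ∑ k ∈ (Finset.range (n + 1)).filter (fun k => k + m ≤ n),
        (Nat.descFactorial n (k + m) : ℝ) * ζ k
      = ∑ k ∈ Finset.Icc m n, ∑ j ∈ Finset.range (k - m + 1),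
          (-1 : ℝ) ^ (k - j - m) *
            ((Nat.factorial n : ℝ) /
              ((Nat.factorial j : ℝ) * (Nat.factorial (k - m - j) : ℝ) *
                (Nat.factorial (n - k) : ℝ))) * z j := by
  intro m hm n
  by_cases hmn : m ≤ n
  swap
  · have h1 : (Finset.range (n + 1)).filter (fun k => k + m ≤ n) = ∅ := by
      apply Finset.filter_false_of_mem; intro k hk; omega
    have h2 : Finset.Icc m n = ∅ := by rw [Finset.Icc_eq_empty_iff]; omega
    rw [h1, h2]; simp
  set N := n - m with hN
  -- LHS index set
  have hset : (Finset.range (n + 1)).filter (fun k => k + m ≤ n) = Finset.range (N + 1) := by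
    ext k; simp only [Finset.mem_filter, Finset.mem_range]; omega
  rw [hset]
  -- reindex RHS
  rw [show Finset.Icc m n = Finset.Ico m (n + 1) by rw [Finset.Ico_add_one_right_eq_Icc],
    Finset.sum_Ico_eq_sum_range, show n + 1 - m = N + 1 by omega]
  -- simplify RHS term by term
  have hRHS : ∀ s ∈ Finset.range (N + 1),
      (∑ j ∈ Finset.range ((m + s) - m + 1),
        (-1 : ℝ) ^ ((m + s) - j - m) *
          ((Nat.factorial n : ℝ) /
            ((Nat.factorial j : ℝ) * (Nat.factorial ((m + s) - m - j) : ℝ) *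
              (Nat.factorial (n - (m + s)) : ℝ))) * z j)
      = (Nat.factorial n : ℝ) / (Nat.factorial (N - s) : ℝ) * ζ s := by
    intro s hs
    have hsN : s ≤ N := Nat.lt_succ_iff.mp (Finset.mem_range.mp hs)
    have e1 : (m + s) - m = s := by omega
    have e2 : n - (m + s) = N - s := by omega
    rw [e1, e2]
    have e3 : ∀ j ∈ Finset.range (s + 1), (m + s) - j - m = s - j := fun j hj => by
      have := Nat.lt_succ_iff.mp (Finset.mem_range.mp hj); omega
    calc ∑ j ∈ Finset.range (s + 1),
            (-1 : ℝ) ^ ((m + s) - j - m) *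
              ((Nat.factorial n : ℝ) /
                ((Nat.factorial j : ℝ) * (Nat.factorial (s - j) : ℝ) *
                  (Nat.factorial (N - s) : ℝ))) * z j
        = ∑ j ∈ Finset.range (s + 1), ∑ l ∈ Finset.range (s + 1),
            (-1 : ℝ) ^ (s - j) *
              ((Nat.factorial n : ℝ) /
                ((Nat.factorial j : ℝ) * (Nat.factorial (s - j) : ℝ) *
                  (Nat.factorial (N - s) : ℝ))) *
              ((Nat.descFactorial j l : ℝ) * ζ l) := by
          refine Finset.sum_congr rfl fun j hj => ?_
          have hjs : j ≤ s := Nat.lt_succ_iff.mp (Finset.mem_range.mp hj)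
          have hext : ∑ l ∈ Finset.range (j + 1), (Nat.descFactorial j l : ℝ) * ζ l
              = ∑ l ∈ Finset.range (s + 1), (Nat.descFactorial j l : ℝ) * ζ l := by
            refine Finset.sum_subset (Finset.range_subset_range.mpr (Nat.succ_le_succ hjs)) ?_
            intro l hl hl'
            simp only [Finset.mem_range] at hl hl'
            rw [Nat.descFactorial_eq_zero_iff_lt.mpr (by omega)]; simp
          rw [e3 j hj, hz j, hext, Finset.mul_sum]
      _ = ∑ l ∈ Finset.range (s + 1), ∑ j ∈ Finset.range (s + 1),
            (-1 : ℝ) ^ (s - j) *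
              ((Nat.factorial n : ℝ) /
                ((Nat.factorial j : ℝ) * (Nat.factorial (s - j) : ℝ) *
                  (Nat.factorial (N - s) : ℝ))) *
              ((Nat.descFactorial j l : ℝ) * ζ l) := Finset.sum_comm
      _ = ∑ l ∈ Finset.range (s + 1),
            ((Nat.factorial n : ℝ) / (Nat.factorial (N - s) : ℝ) * ζ l) *
              (if s = l then 1 else 0) := by
          refine Finset.sum_congr rfl fun l hl => ?_
          rw [← key_sum s l, Finset.mul_sum]
          refine Finset.sum_congr rfl fun j hj => ?_
          field_simp
      _ = (Nat.factorial n : ℝ) / (Nat.factorial (N - s) : ℝ) * ζ s := by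
          simp only [mul_ite, mul_one, mul_zero]
          rw [Finset.sum_ite_eq]
          simp [Nat.lt_succ_iff]
  rw [Finset.sum_congr rfl hRHS]
  -- LHS term by term
  refine Finset.sum_congr rfl fun k hk => ?_
  have hkN : k ≤ N := Nat.lt_succ_iff.mp (Finset.mem_range.mp hk)
  have h : Nat.factorial (n - (k + m)) * Nat.descFactorial n (k + m) = Nat.factorial n :=
    Nat.factorial_mul_descFactorial (by omega)
  have h' : (Nat.factorial (N - k) : ℝ) * (Nat.descFactorial n (k + m) : ℝ)
      = (Nat.factorial n : ℝ) := by
    rw [show n - (k + m) = N - k by omega] at h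
    exact_mod_cast congrArg (Nat.cast : ℕ → ℝ) h
  have hf : (Nat.factorial (N - k) : ℝ) ≠ 0 := Nat.cast_ne_zero.mpr (Nat.factorial_ne_zero _)
  rw [← h']
  field_simp
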